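/- Let $N \ge 1$, and for each $i = 1,\dots,N$ let $X_i \ge 0$ with $\sum_i X_i > 0$, and let $\psi_i = X_i / \sum_{j \in \mathcal{N}_i} X_j$, where each neighbourhood $\mathcal{N}_i$ contains $i$ and has $|\mathcal{N}_i| \le 2^d + 1$, and the neighbour relation is symmetric ($j \in \mathcal{N}_i \iff i \in \mathcal{N}_j$). Then $\sum_i X_i \psi_i \ge \frac{1}{2^d+1} \sum_i X_i$. -/

import Mathlib

theorem stmt_8 {ι : Type*} [Fintype ι] (d : ℕ) (𝒩 : ι → Finset ι)
    (hself : ∀ i, i ∈ 𝒩 i) (hcard : ∀ i, (𝒩 i).card ≤ 2 ^ d + 1)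
    (hsymm : ∀ i j, j ∈ 𝒩 i ↔ i ∈ 𝒩 j)
    (X : ι → ℝ) (hX : ∀ i, 0 ≤ X i) (hpos : 0 < ∑ i, X i) :
    (1 / (2 ^ d + 1 : ℝ)) * ∑ i, X i ≤
      ∑ i, X i * (X i / ∑ j ∈ 𝒩 i, X j) := by
  set S := ∑ i, X i with hS
  set T : ι → ℝ := fun i => ∑ j ∈ 𝒩 i, X j with hT
  have hTnn : ∀ i, 0 ≤ T i := fun i => Finset.sum_nonneg fun j _ => hX j
  have hXT : ∀ i, X i ≤ T i := fun i =>
    Finset.single_le_sum (fun j _ => hX j) (hself i)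
  have hA : 0 ≤ ∑ i, X i * (X i / T i) :=
    Finset.sum_nonneg fun i _ => mul_nonneg (hX i) (div_nonneg (hX i) (hTnn i))
  -- Cauchy–Schwarz
  have hCS : S ^ 2 ≤ (∑ i, X i * (X i / T i)) * ∑ i, T i := by
    have key : (∑ i, (X i / Real.sqrt (T i)) * Real.sqrt (T i)) ^ 2 ≤
        (∑ i, (X i / Real.sqrt (T i)) ^ 2) * ∑ i, Real.sqrt (T i) ^ 2 :=
      Finset.sum_mul_sq_le_sq_mul_sq _ _ _
    have h1 : ∀ i, (X i / Real.sqrt (T i)) * Real.sqrt (T i) = X i := by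
      intro i
      rcases eq_or_lt_of_le (hTnn i) with h | h
      · have hx0 : X i = 0 := le_antisymm (h ▸ hXT i) (hX i)
        simp [hx0]
      · rw [div_mul_cancel₀]
        exact (Real.sqrt_pos.mpr h).ne'
    have h2 : ∀ i, (X i / Real.sqrt (T i)) ^ 2 = X i * (X i / T i) := by
      intro i
      rw [div_pow, Real.sq_sqrt (hTnn i), sq, mul_div_assoc]
    have h3 : ∀ i, Real.sqrt (T i) ^ 2 = T i := fun i => Real.sq_sqrt (hTnn i)
    calc S ^ 2 = (∑ i, (X i / Real.sqrt (T i)) * Real.sqrt (T i)) ^ 2 := by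
          simp only [h1]
          rfl
      _ ≤ (∑ i, (X i / Real.sqrt (T i)) ^ 2) * ∑ i, Real.sqrt (T i) ^ 2 := key
      _ = (∑ i, X i * (X i / T i)) * ∑ i, T i := by simp only [h2, h3]
  have hTsum : ∑ i, T i ≤ ((2 : ℝ) ^ d + 1) * S := by
    have hswap : ∑ i, T i = ∑ j, ((𝒩 j).card : ℝ) * X j := by
      rw [hT]
      rw [Finset.sum_comm' (s' := 𝒩) (t' := (Finset.univ : Finset ι))
        (by intro i j; simp [hsymm i j])]
      simp [Finset.sum_const, nsmul_eq_mul]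
    rw [hswap, hS, Finset.mul_sum]
    refine Finset.sum_le_sum fun j _ => ?_
    refine mul_le_mul_of_nonneg_right ?_ (hX j)
    calc ((𝒩 j).card : ℝ) ≤ ((2 ^ d + 1 : ℕ) : ℝ) := by exact_mod_cast hcard j
      _ = (2 : ℝ) ^ d + 1 := by push_cast; ring
  have hchain : S ^ 2 ≤ (∑ i, X i * (X i / T i)) * (((2 : ℝ) ^ d + 1) * S) :=
    hCS.trans (mul_le_mul_of_nonneg_left hTsum hA)
  have hdpos : (0 : ℝ) < (2 : ℝ) ^ d + 1 := by positivity
  rw [div_mul_eq_mul_div, one_mul, div_le_iff₀ hdpos]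
  show S ≤ (∑ i, X i * (X i / T i)) * ((2:ℝ) ^ d + 1)
  nlinarith [hchain, hpos]
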